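/- Let (X,μ) be a separable metric probability space, T : X → X a measurable map preserving μ with μ ergodic, and φ : X → ℝ integrable with ∫ φ dμ = 0. Then there exists a set X̃ ⊆ X of full μ-measure such that for every x ∈ X̃ there is a strictly increasing sequence of positive integers (n_i) with T^{n_i}(x) → x and |∑_{j=0}^{n_i−1} φ(T^j(x))| → 0 as i → ∞. -/

import Mathlib

open Filter Topology MeasureTheory

section Aux
set_option linter.unusedSectionVars false

variable {X : Type*} [MeasurableSpace X] {μ : Measure X} {T : X → X}








/-- Recursive maximal function: `atkMax T ψ N x = max (0, max_{1 ≤ n ≤ N} S_n ψ x)`. -/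
noncomputable def atkMax (T : X → X) (ψ : X → ℝ) : ℕ → X → ℝ
  | 0 => fun _ => 0
  | (N + 1) => fun x => max 0 (ψ x + atkMax T ψ N (T x))

lemma atkMax_nonneg (ψ : X → ℝ) (N : ℕ) (x : X) : 0 ≤ atkMax T ψ N x := by
  cases N with
  | zero => simp [atkMax]
  | succ n => exact le_max_left _ _

lemma atkMax_le_succ (ψ : X → ℝ) (N : ℕ) (x : X) :
    atkMax T ψ N x ≤ atkMax T ψ (N + 1) x := by
  induction N generalizing x with
  | zero => exact atkMax_nonneg ψ 1 x
  | succ n ih =>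
    simp only [atkMax]
    exact max_le_max le_rfl (add_le_add le_rfl (ih (T x)))

lemma atkMax_mono (ψ : X → ℝ) {M N : ℕ} (h : M ≤ N) (x : X) :
    atkMax T ψ M x ≤ atkMax T ψ N x := by
  induction N with
  | zero => simp_all
  | succ n ih =>
    rcases Nat.lt_or_ge M (n+1) with h' | h'
    · exact (ih (Nat.lt_succ_iff.mp h')).trans (atkMax_le_succ ψ n x)
    · have : M = n + 1 := le_antisymm h h'
      simp [this]

lemma birkhoffSum_le_atkMax (ψ : X → ℝ) {n N : ℕ} (h : n ≤ N) (x : X) :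
    birkhoffSum T ψ n x ≤ atkMax T ψ N x := by
  induction N generalizing n x with
  | zero =>
    interval_cases n
    simp [birkhoffSum_zero, atkMax]
  | succ N ih =>
    cases n with
    | zero => simpa [birkhoffSum_zero] using atkMax_nonneg ψ (N+1) x
    | succ m =>
      have := ih (n := m) (Nat.succ_le_succ_iff.mp h) (T x)
      calc birkhoffSum T ψ (m+1) x = ψ x + birkhoffSum T ψ m (T x) :=
            birkhoffSum_succ' T ψ m x
        _ ≤ ψ x + atkMax T ψ N (T x) := by linarith
        _ ≤ max 0 (ψ x + atkMax T ψ N (T x)) := le_max_right _ _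
        _ = atkMax T ψ (N+1) x := rfl

lemma atkMax_eq_birkhoffSum (ψ : X → ℝ) (N : ℕ) (x : X) :
    ∃ n ≤ N, atkMax T ψ N x = birkhoffSum T ψ n x := by
  induction N generalizing x with
  | zero => exact ⟨0, le_rfl, by simp [atkMax]⟩
  | succ N ih =>
    rcases max_cases 0 (ψ x + atkMax T ψ N (T x)) with ⟨h1, _⟩ | ⟨h1, _⟩
    · exact ⟨0, Nat.zero_le _, by simp [atkMax, h1]⟩
    · obtain ⟨m, hm, hme⟩ := ih (T x)
      exact ⟨m + 1, Nat.succ_le_succ hm, by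
        show max 0 (ψ x + atkMax T ψ N (T x)) = _
        rw [h1, hme, ← birkhoffSum_succ']⟩

lemma atkMax_measurable [MeasurableSpace X] (hT : Measurable T) {ψ : X → ℝ}
    (hm : Measurable ψ) (N : ℕ) : Measurable (atkMax T ψ N) := by
  induction N with
  | zero => exact measurable_const
  | succ n ih => exact (measurable_const.max ((hm.add (ih.comp hT))))

lemma atkMax_integrable [IsFiniteMeasure μ] (hT : MeasurePreserving T μ μ) {ψ : X → ℝ}
    (hm : Measurable ψ) (hi : Integrable ψ μ) (N : ℕ) :
    Integrable (atkMax T ψ N) μ := by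
  induction N with
  | zero => exact integrable_const 0
  | succ n ih =>
    have : Integrable (fun x => atkMax T ψ n (T x)) μ :=
      (hT.integrable_comp (atkMax_measurable hT.measurable hm n).aestronglyMeasurable).2 ih
    exact (integrable_const 0).sup (hi.add this)

/-- Garsia's form of the maximal ergodic inequality. -/
lemma garsia [IsFiniteMeasure μ] (hT : MeasurePreserving T μ μ) {ψ : X → ℝ}
    (hm : Measurable ψ) (hi : Integrable ψ μ) (N : ℕ) :
    0 ≤ ∫ x in {x | 0 < atkMax T ψ N x}, ψ x ∂μ := by
  have hmes : ∀ M, Measurable (atkMax T ψ M) := atkMax_measurable hT.measurable hm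
  have hint : ∀ M, Integrable (atkMax T ψ M) μ := atkMax_integrable hT hm hi
  have hcomp : Integrable (fun x => atkMax T ψ N (T x)) μ :=
    (hT.integrable_comp (hmes N).aestronglyMeasurable).2 (hint N)
  have hEm : MeasurableSet {x | 0 < atkMax T ψ N x} :=
    measurableSet_lt measurable_const (hmes N)
  have hpt : ∀ x, atkMax T ψ N x - atkMax T ψ N (T x) ≤
      Set.indicator {x | 0 < atkMax T ψ N x} ψ x := by
    intro x
    by_cases hx : 0 < atkMax T ψ N x
    · rw [Set.indicator_of_mem (show x ∈ {x | 0 < atkMax T ψ N x} from hx)]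
      cases N with
      | zero => simp [atkMax] at hx
      | succ M =>
        have h1 : atkMax T ψ (M+1) x = ψ x + atkMax T ψ M (T x) := by
          have : ¬ (ψ x + atkMax T ψ M (T x) ≤ 0) := by
            intro h
            have : atkMax T ψ (M+1) x = 0 := by
              show max 0 _ = 0
              simp [max_eq_left h]
            simp [this] at hx
          show max 0 _ = _
          rw [max_eq_right (le_of_not_ge (fun h => this (h.trans' le_rfl)))]
        have h2 : atkMax T ψ M (T x) ≤ atkMax T ψ (M+1) (T x) := atkMax_le_succ ψ M (T x)
        linarith
    · have h0 : atkMax T ψ N x = 0 :=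
        le_antisymm (le_of_not_gt hx) (atkMax_nonneg ψ N x)
      rw [Set.indicator_of_notMem (show x ∉ {x | 0 < atkMax T ψ N x} from hx), h0]
      simpa using atkMax_nonneg ψ N (T x)
  have hci : ∫ x, atkMax T ψ N (T x) ∂μ = ∫ x, atkMax T ψ N x ∂μ := by
    rw [← integral_map hT.measurable.aemeasurable (hmes N).aestronglyMeasurable, hT.map_eq]
  have h1 : ∫ x, (atkMax T ψ N x - atkMax T ψ N (T x)) ∂μ ≤
      ∫ x, Set.indicator {x | 0 < atkMax T ψ N x} ψ x ∂μ :=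
    integral_mono ((hint N).sub hcomp) (hi.indicator hEm) hpt
  rw [integral_sub (hint N) hcomp, hci, sub_self, integral_indicator hEm] at h1
  exact h1




/-- Key lemma: if `∫ ψ < 0` then a.e. the Birkhoff sums of `ψ` are bounded above. -/
lemma atk_key [IsProbabilityMeasure μ] (hT : Ergodic T μ) {ψ : X → ℝ}
    (hm : Measurable ψ) (hi : Integrable ψ μ) (hneg : ∫ x, ψ x ∂μ < 0) :
    ∀ᵐ x ∂μ, ∃ C : ℝ, ∀ n : ℕ, birkhoffSum T ψ n x ≤ C := by
  have hTm : Measurable T := hT.toMeasurePreserving.measurable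
  have hSm : ∀ n : ℕ, Measurable (fun x => birkhoffSum T ψ n x) := by
    intro n
    exact Finset.measurable_sum _ fun j _ => hm.comp (hTm.iterate j)
  set E : Set X := {x | ∀ C : ℝ, ∃ n : ℕ, C < birkhoffSum T ψ n x} with hE
  have hEeq : E = ⋂ (k : ℕ), ⋃ (n : ℕ), {x | (k : ℝ) < birkhoffSum T ψ n x} := by
    ext x
    simp only [Set.mem_setOf_eq, Set.mem_iInter, Set.mem_iUnion, hE]
    constructor
    · intro h k; exact h k
    · intro h C
      obtain ⟨k, hk⟩ := exists_nat_ge C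
      obtain ⟨n, hn⟩ := h k
      exact ⟨n, lt_of_le_of_lt hk hn⟩
  have hEm : MeasurableSet E := by
    rw [hEeq]
    exact MeasurableSet.iInter fun k => MeasurableSet.iUnion fun n =>
      measurableSet_lt measurable_const (hSm n)
  have hinv : T ⁻¹' E = E := by
    ext x
    simp only [Set.mem_preimage, Set.mem_setOf_eq, hE]
    constructor
    · intro h C
      obtain ⟨n, hn⟩ := h (C - ψ x)
      refine ⟨n + 1, ?_⟩
      rw [birkhoffSum_succ' T ψ n x]
      linarith
    · intro h C
      obtain ⟨m, hm'⟩ := h (max (C + ψ x) 0)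
      have hm1 : m ≠ 0 := by
        rintro rfl
        simp only [birkhoffSum_zero] at hm'
        have := le_max_right (C + ψ x) 0
        linarith
      obtain ⟨n, rfl⟩ := Nat.exists_eq_succ_of_ne_zero hm1
      rw [birkhoffSum_succ' T ψ n x] at hm'
      have := le_max_left (C + ψ x) 0
      exact ⟨n, by linarith⟩
  rcases hT.toPreErgodic.ae_empty_or_univ hEm hinv with h | h
  · have : μ E = 0 := by simpa using measure_congr h
    filter_upwards [measure_eq_zero_iff_ae_notMem.mp this] with x hx
    simp only [Set.mem_setOf_eq, hE] at hx
    push_neg at hx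
    obtain ⟨C, hC⟩ := hx
    exact ⟨C, fun n => (hC n)⟩
  · exfalso
    set U : Set X := ⋃ N, {x | 0 < atkMax T ψ N x} with hU
    have hUm : ∀ N : ℕ, MeasurableSet {x | 0 < atkMax T ψ N x} := fun N =>
      measurableSet_lt measurable_const (atkMax_measurable hTm hm N)
    have hmono : Monotone (fun N => {x | 0 < atkMax T ψ N x}) :=
      monotone_nat_of_le_succ fun N x hx =>
        lt_of_lt_of_le hx (atkMax_le_succ ψ N x)
    have h1 := tendsto_setIntegral_of_monotone hUm hmono hi.integrableOn
    have h2 : 0 ≤ ∫ x in U, ψ x ∂μ :=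
      ge_of_tendsto h1 (Eventually.of_forall fun N => garsia hT.toMeasurePreserving hm hi N)
    have hEU : E ⊆ U := by
      intro x hx
      obtain ⟨n, hn⟩ := hx 0
      exact Set.mem_iUnion.mpr ⟨n, lt_of_lt_of_le hn (birkhoffSum_le_atkMax ψ le_rfl x)⟩
    have hUc : μ Uᶜ = 0 := by
      have hEc : μ Eᶜ = 0 := ae_eq_univ.mp h
      exact measure_mono_null (Set.compl_subset_compl.mpr hEU) hEc
    have h3 : ∫ x in U, ψ x ∂μ = ∫ x, ψ x ∂μ := by
      rw [setIntegral_congr_set (ae_eq_univ.mpr hUc), setIntegral_univ]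
    rw [h3] at h2
    linarith

/-- Birkhoff-type two-sided bound. -/
lemma atk_bound [IsProbabilityMeasure μ] (hT : Ergodic T μ) {ψ : X → ℝ}
    (hm : Measurable ψ) (hi : Integrable ψ μ) :
    ∀ᵐ x ∂μ, ∀ δ : ℝ, 0 < δ → ∃ C : ℝ, ∀ n : ℕ,
      |birkhoffSum T ψ n x - n * ∫ y, ψ y ∂μ| ≤ δ * n + C := by
  set I := ∫ y, ψ y ∂μ with hI
  have hsum : ∀ (c : ℝ) (n : ℕ) (x : X),
      birkhoffSum T (fun y => ψ y - c) n x = birkhoffSum T ψ n x - n * c := by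
    intro c n x
    simp only [birkhoffSum, Finset.sum_sub_distrib, Finset.sum_const, Finset.card_range,
      nsmul_eq_mul]
  have H : ∀ q : ℚ, 0 < q → ∀ᵐ x ∂μ, ∃ C : ℝ, ∀ n : ℕ,
      |birkhoffSum T ψ n x - n * I| ≤ (q : ℝ) * n + C := by
    intro q hq
    have hq' : (0 : ℝ) < q := by exact_mod_cast hq
    have key1 := atk_key hT (ψ := fun y => ψ y - (I + q))
      (hm.sub measurable_const) (hi.sub (integrable_const _)) (by
        rw [integral_sub hi (integrable_const _), integral_const]
        simp [hI]; linarith)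
    have key2 := atk_key hT (ψ := fun y => (I - q) - ψ y)
      (measurable_const.sub hm) ((integrable_const _).sub hi) (by
        rw [integral_sub (integrable_const _) hi, integral_const]
        simp [hI]; linarith)
    filter_upwards [key1, key2] with x ⟨C1, hC1⟩ ⟨C2, hC2⟩
    refine ⟨max C1 C2, fun n => ?_⟩
    have h1 := hC1 n
    have h2 := hC2 n
    rw [hsum] at h1
    have h2' : birkhoffSum T (fun y => (I - q) - ψ y) n x
        = n * (I - q) - birkhoffSum T ψ n x := by
      simp only [birkhoffSum, Finset.sum_sub_distrib, Finset.sum_const, Finset.card_range,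
        nsmul_eq_mul]
      ring
    rw [h2'] at h2
    rw [abs_le]
    constructor
    · have := le_max_right C1 C2
      have hnq : (n : ℝ) * (I - q) = n * I - q * n := by ring
      nlinarith [h2]
    · have := le_max_left C1 C2
      have : birkhoffSum T ψ n x - n * I ≤ q * n + C1 := by
        have hnq : (n : ℝ) * (I + q) = n * I + q * n := by ring
        linarith
      linarith [le_max_left C1 C2]
  have Hq : ∀ᵐ x ∂μ, ∀ q : ℚ, 0 < q → ∃ C : ℝ, ∀ n : ℕ,
      |birkhoffSum T ψ n x - n * I| ≤ (q : ℝ) * n + C := by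
    rw [ae_all_iff]
    intro q
    by_cases hq : 0 < q
    · filter_upwards [H q hq] with x hx _; exact hx
    · filter_upwards with x hq'; exact absurd hq' hq
  filter_upwards [Hq] with x hx δ hδ
  obtain ⟨q, hq0, hqδ⟩ := exists_rat_btwn hδ
  have hq0' : 0 < q := by exact_mod_cast hq0
  obtain ⟨C, hC⟩ := hx q hq0'
  refine ⟨C, fun n => (hC n).trans ?_⟩
  have : (q : ℝ) * n ≤ δ * n := by
    apply mul_le_mul_of_nonneg_right (le_of_lt hqδ) (Nat.cast_nonneg n)
  linarith


lemma floor_sep {ε a b : ℝ} (hε : 0 < ε) (h : ⌊a / ε⌋ = ⌊b / ε⌋) : |a - b| < ε := by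
  have ha1 := Int.lt_floor_add_one (a / ε)
  have ha2 := Int.floor_le (a / ε)
  have hb1 := Int.lt_floor_add_one (b / ε)
  have hb2 := Int.floor_le (b / ε)
  rw [h] at ha1 ha2
  have : |a / ε - b / ε| < 1 := abs_lt.mpr ⟨by linarith, by linarith⟩
  calc |a - b| = |a / ε - b / ε| * ε := by
        rw [div_sub_div_same, abs_div, abs_of_pos hε, div_mul_cancel₀]
        exact ne_of_gt hε
    _ < 1 * ε := by exact mul_lt_mul_of_pos_right this hε
    _ = ε := one_mul ε

/-- Atkinson recurrence: a.e. point of `A` returns to `A` with small Birkhoff sum. -/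
lemma atk_star [IsProbabilityMeasure μ] (hT : Ergodic T μ) {φ : X → ℝ}
    (hm : Measurable φ) (hi : Integrable φ μ) (hmean : ∫ y, φ y ∂μ = 0)
    {A : Set X} (hA : MeasurableSet A) {ε : ℝ} (hε : 0 < ε) :
    ∀ᵐ x ∂μ, x ∈ A → ∃ n : ℕ, 1 ≤ n ∧ T^[n] x ∈ A ∧ |birkhoffSum T φ n x| < ε := by
  classical
  have hTm : Measurable T := hT.toMeasurePreserving.measurable
  have hSm : ∀ n : ℕ, Measurable (fun x => birkhoffSum T φ n x) := fun n =>
    Finset.measurable_sum _ fun j _ => hm.comp (hTm.iterate j)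
  set B : Set X := A ∩ {x | ∀ n : ℕ, 1 ≤ n → T^[n] x ∈ A → ε ≤ |birkhoffSum T φ n x|} with hB
  have hBm : MeasurableSet B := by
    apply hA.inter
    have : {x | ∀ n : ℕ, 1 ≤ n → T^[n] x ∈ A → ε ≤ |birkhoffSum T φ n x|} =
        ⋂ (n : ℕ), {x | 1 ≤ n → T^[n] x ∈ A → ε ≤ |birkhoffSum T φ n x|} := by
      ext x; simp [Set.mem_iInter]
    rw [this]
    refine MeasurableSet.iInter fun n => ?_
    by_cases hn : 1 ≤ n
    · have : {x | 1 ≤ n → T^[n] x ∈ A → ε ≤ |birkhoffSum T φ n x|} =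
          (T^[n] ⁻¹' A)ᶜ ∪ {x | ε ≤ |birkhoffSum T φ n x|} := by
        ext x
        simp only [Set.mem_setOf_eq, Set.mem_union, Set.mem_compl_iff, Set.mem_preimage]
        constructor
        · intro h
          by_cases hx : T^[n] x ∈ A
          · exact Or.inr (h hn hx)
          · exact Or.inl hx
        · rintro (h | h) _ hx
          · exact absurd hx h
          · exact h
      rw [this]
      exact ((hTm.iterate n) hA).compl.union
        (measurableSet_le measurable_const ((hSm n).abs))
    · have : {x | 1 ≤ n → T^[n] x ∈ A → ε ≤ |birkhoffSum T φ n x|} = Set.univ := by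
        ext x; simp only [Set.mem_setOf_eq, Set.mem_univ, iff_true]
        intro h; exact absurd h hn
      rw [this]; exact MeasurableSet.univ
  suffices hB0 : μ B = 0 by
    filter_upwards [measure_eq_zero_iff_ae_notMem.mp hB0] with x hx hxA
    rw [hB, Set.mem_inter_iff] at hx
    push_neg at hx
    have h2 := hx hxA
    simp only [Set.mem_setOf_eq] at h2
    push_neg at h2
    obtain ⟨n, hn1, hnA, hnε⟩ := h2
    exact ⟨n, hn1, hnA, hnε⟩
  by_contra hB0
  set β : ℝ := (μ B).toReal with hβdef
  have hβ : 0 < β := ENNReal.toReal_pos hB0 (measure_ne_top μ B)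
  set ψ : X → ℝ := B.indicator (fun _ => (1 : ℝ)) with hψdef
  have hψm : Measurable ψ := (measurable_const.indicator hBm)
  have hψi : Integrable ψ μ := (integrable_const (1 : ℝ)).indicator hBm
  have hψI : ∫ y, ψ y ∂μ = β := by
    rw [hψdef, integral_indicator_const _ hBm]; simp [hβdef]; rfl
  have hae := (atk_bound hT hψm hψi).and (atk_bound hT hm hi)
  obtain ⟨x, hx1, hx2⟩ := hae.exists
  rw [hψI] at hx1
  rw [hmean] at hx2
  -- choose δ
  set δ : ℝ := β * ε / (2 * (ε + 2)) with hδdef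
  have hδ : 0 < δ := by positivity
  obtain ⟨C', hC'⟩ := hx1 δ hδ
  obtain ⟨C, hC⟩ := hx2 δ hδ
  have hC0 : 0 ≤ C := by simpa [birkhoffSum_zero] using hC 0
  have hC'0 : 0 ≤ C' := by simpa [birkhoffSum_zero] using hC' 0
  -- main estimate for each N
  have main : ∀ N : ℕ, (N : ℝ) * β - (δ * N + C') ≤ 2 * (δ * N + C) / ε + 2 := by
    intro N
    set J : Finset ℕ := (Finset.range N).filter (fun j => T^[j] x ∈ B) with hJ
    -- card J = birkhoffSum ψ N x
    have hcard : (J.card : ℝ) = birkhoffSum T ψ N x := by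
      rw [hJ, birkhoffSum, Finset.card_filter]
      push_cast
      refine Finset.sum_congr rfl fun j _ => ?_
      by_cases h : T^[j] x ∈ B <;> simp [hψdef, Set.indicator_apply, h]
    -- lower bound on card J
    have hlow : (N : ℝ) * β - (δ * N + C') ≤ (J.card : ℝ) := by
      have := hC' N
      rw [abs_le] at this
      rw [hcard]; linarith [this.1]
    -- separation
    have hsep : ∀ j ∈ J, ∀ j' ∈ J, j ≠ j' →
        ε ≤ |birkhoffSum T φ j x - birkhoffSum T φ j' x| := by
      have key : ∀ j j', j ∈ J → j' ∈ J → j < j' →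
          ε ≤ |birkhoffSum T φ j' x - birkhoffSum T φ j x| := by
        intro j j' hj hj' hlt
        rw [hJ, Finset.mem_filter] at hj hj'
        set m := j' - j with hmdef
        have hm1 : 1 ≤ m := Nat.le_sub_of_add_le (by omega)
        have hjm : j + m = j' := by omega
        have hadd : birkhoffSum T φ j' x =
            birkhoffSum T φ j x + birkhoffSum T φ m (T^[j] x) := by
          rw [← hjm, birkhoffSum_add]
        have hiter : T^[m] (T^[j] x) = T^[j'] x := by
          rw [← Function.iterate_add_apply]
          congr 1; omega
        have hjB : T^[j] x ∈ B := hj.2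
        have hj'B : T^[j'] x ∈ B := hj'.2
        have := hjB.2 m hm1 (by rw [hiter]; exact hj'B.1)
        rw [hadd]
        simpa [add_sub_cancel_left] using this
      intro j hj j' hj' hne
      rcases lt_or_gt_of_ne hne with h | h
      · rw [abs_sub_comm]; exact key j j' hj hj' h
      · exact key j' j hj' hj h
    -- injectivity of floor map
    set g : ℕ → ℤ := fun j => ⌊birkhoffSum T φ j x / ε⌋ with hg
    have hginj : Set.InjOn g J := by
      intro j hj j' hj' hgeq
      by_contra hne
      have := hsep j hj j' hj' hne
      have := floor_sep hε hgeq
      linarith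
    -- range of g
    set R : ℝ := δ * N + C with hR
    have hRpos : 0 ≤ R := by positivity
    have hmaps : ∀ j ∈ J, g j ∈ Finset.Icc ⌊-(R / ε)⌋ ⌊R / ε⌋ := by
      intro j hj
      rw [hJ, Finset.mem_filter, Finset.mem_range] at hj
      have hjb := hC j
      rw [Finset.mem_Icc]
      have hjN : |birkhoffSum T φ j x| ≤ R := by
        have : δ * j ≤ δ * N := by
          apply mul_le_mul_of_nonneg_left _ hδ.le
          exact_mod_cast hj.1.le
        calc |birkhoffSum T φ j x| = |birkhoffSum T φ j x - j * 0| := by simp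
          _ ≤ δ * j + C := hC j
          _ ≤ R := by rw [hR]; linarith
      rw [abs_le] at hjN
      have hdiv : ∀ a b : ℝ, a ≤ b → a / ε ≤ b / ε := fun a b h => by gcongr
      constructor
      · apply Int.floor_mono
        calc -(R / ε) = -R / ε := (neg_div ε R).symm
          _ ≤ birkhoffSum T φ j x / ε := hdiv _ _ hjN.1
      · exact Int.floor_mono (hdiv _ _ hjN.2)
    have hcardle : J.card ≤ (Finset.Icc ⌊-(R / ε)⌋ ⌊R / ε⌋).card :=
      Finset.card_le_card_of_injOn g (fun j hj => hmaps j hj) hginj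
    have hIcc : ((Finset.Icc ⌊-(R / ε)⌋ ⌊R / ε⌋).card : ℝ) ≤ 2 * R / ε + 2 := by
      rw [Int.card_Icc]
      have h1 : (⌊R / ε⌋ : ℝ) ≤ R / ε := Int.floor_le _
      have h2 : -(R / ε) - 1 ≤ (⌊-(R / ε)⌋ : ℝ) := by
        linarith [Int.lt_floor_add_one (-(R / ε))]
      have hle : (⌊-(R / ε)⌋ : ℤ) ≤ ⌊R / ε⌋ := by
        apply Int.floor_mono
        have : 0 ≤ R / ε := div_nonneg hRpos hε.le
        linarith
      have hnn : (0:ℤ) ≤ ⌊R / ε⌋ + 1 - ⌊-(R / ε)⌋ := by omega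
      have hcast : ((⌊R / ε⌋ + 1 - ⌊-(R / ε)⌋).toNat : ℝ)
          = ((⌊R / ε⌋ : ℝ) + 1 - (⌊-(R / ε)⌋ : ℝ)) := by
        exact_mod_cast congrArg (fun z : ℤ => (z : ℝ)) (Int.toNat_of_nonneg hnn)
      rw [hcast]
      have : (2 : ℝ) * R / ε = R / ε + R / ε := by ring
      linarith
    calc (N : ℝ) * β - (δ * N + C') ≤ (J.card : ℝ) := hlow
      _ ≤ ((Finset.Icc ⌊-(R / ε)⌋ ⌊R / ε⌋).card : ℝ) := by exact_mod_cast hcardle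
      _ ≤ 2 * R / ε + 2 := hIcc
      _ = 2 * (δ * N + C) / ε + 2 := by rw [hR]
  -- derive contradiction
  have hε' : ε ≠ 0 := hε.ne'
  have hδβ : δ + 2 * δ / ε = β / 2 := by
    rw [hδdef]
    field_simp
  have main2 : ∀ N : ℕ, (N : ℝ) * (β / 2) ≤ C' + 2 * C / ε + 2 := by
    intro N
    have := main N
    have hexp : 2 * (δ * N + C) / ε = 2 * δ / ε * N + 2 * C / ε := by ring
    rw [hexp] at this
    have key : (N : ℝ) * δ + 2 * δ / ε * N = (N : ℝ) * (β / 2) := by rw [← hδβ]; ring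
    linarith [this, key]
  obtain ⟨N, hN⟩ := exists_nat_gt ((C' + 2 * C / ε + 2) / (β / 2))
  have : (C' + 2 * C / ε + 2) < N * (β / 2) := by
    rw [div_lt_iff₀ (by linarith)] at hN
    linarith
  linarith [main2 N]

end Aux


section Cover

variable {X : Type*} [MetricSpace X] [TopologicalSpace.SeparableSpace X]
    [MeasurableSpace X] [BorelSpace X] {μ : Measure X} {T : X → X}

lemma atk_cover [IsProbabilityMeasure μ] (hT : Ergodic T μ) {φ : X → ℝ}
    (hm : Measurable φ) (hi : Integrable φ μ) (hmean : ∫ y, φ y ∂μ = 0)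
    {ε : ℝ} (hε : 0 < ε) :
    ∀ᵐ x ∂μ, ∃ n : ℕ, 1 ≤ n ∧ dist (T^[n] x) x < ε ∧ |birkhoffSum T φ n x| < ε := by
  rcases isEmpty_or_nonempty X with hX | hX
  · exfalso
    have h1 : μ Set.univ = 1 := measure_univ
    rw [Set.univ_eq_empty_iff.mpr hX] at h1
    simp at h1
  obtain ⟨s, hsc, hsd⟩ := TopologicalSpace.exists_countable_dense X
  have hsn : s.Nonempty := hsd.nonempty
  obtain ⟨f, hf⟩ := hsc.exists_eq_range hsn
  set D : ℕ → Set X := fun i => Metric.ball (f i) (ε / 3) with hD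
  have hDm : ∀ i, MeasurableSet (D i) := fun i => Metric.isOpen_ball.measurableSet
  have G : ∀ᵐ x ∂μ, ∀ i : ℕ, x ∈ D i →
      ∃ n : ℕ, 1 ≤ n ∧ T^[n] x ∈ D i ∧ |birkhoffSum T φ n x| < ε :=
    ae_all_iff.mpr fun i => atk_star hT hm hi hmean (hDm i) hε
  filter_upwards [G] with x hx
  obtain ⟨y, hy1, hy2⟩ := Metric.dense_iff.mp hsd x (ε / 3) (by positivity)
  obtain ⟨i, rfl⟩ : ∃ i, f i = y := by rw [hf] at hy2; exact hy2
  have hyd : dist (f i) x < ε / 3 := Metric.mem_ball.mp hy1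
  have hxD : x ∈ D i := by
    rw [hD]; simp only [Metric.mem_ball]; rw [dist_comm]; exact hyd
  obtain ⟨n, hn1, hnD, hnS⟩ := hx i hxD
  refine ⟨n, hn1, ?_, hnS⟩
  have h1 : dist (T^[n] x) (f i) < ε / 3 := Metric.mem_ball.mp hnD
  have h2 : dist (f i) x < ε / 3 := hyd
  calc dist (T^[n] x) x ≤ dist (T^[n] x) (f i) + dist (f i) x := dist_triangle _ _ _
    _ < ε / 3 + ε / 3 := add_lt_add h1 h2
    _ < ε := by linarith

theorem atkinson_lemma' (μ : Measure X) [IsProbabilityMeasure μ]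
    (T : X → X) (hT : Ergodic T μ)
    (φ : X → ℝ) (hφ : Integrable φ μ) (hmean : ∫ x, φ x ∂μ = 0) :
    ∃ Xt : Set X, μ Xtᶜ = 0 ∧ ∀ x ∈ Xt, ∃ n : ℕ → ℕ, StrictMono n ∧ (∀ i, 0 < n i) ∧
      Tendsto (fun i => T^[n i] x) atTop (nhds x) ∧
      Tendsto (fun i => |∑ j ∈ Finset.range (n i), φ (T^[j] x)|) atTop (nhds 0) := by
  -- measurable representative
  set φ' : X → ℝ := hφ.1.mk φ with hφ'def
  have hφ'sm : StronglyMeasurable φ' := hφ.1.stronglyMeasurable_mk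
  have hφ'm : Measurable φ' := hφ'sm.measurable
  have hae : φ =ᵐ[μ] φ' := hφ.1.ae_eq_mk
  have hi' : Integrable φ' μ := hφ.congr hae
  have hmean' : ∫ x, φ' x ∂μ = 0 := by rw [← integral_congr_ae hae, hmean]
  -- birkhoff sums agree a.e.
  have hSeq : ∀ᵐ x ∂μ, ∀ n : ℕ, birkhoffSum T φ n x = birkhoffSum T φ' n x := by
    rw [ae_all_iff]
    intro n
    have hjeq : ∀ j : ℕ, (fun x => φ (T^[j] x)) =ᵐ[μ] fun x => φ' (T^[j] x) := by
      intro j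
      exact (hT.toMeasurePreserving.iterate j).quasiMeasurePreserving.ae_eq hae
    have : ∀ᵐ x ∂μ, ∀ j : ℕ, j < n → φ (T^[j] x) = φ' (T^[j] x) := by
      rw [ae_all_iff]
      intro j
      by_cases hj : j < n
      · filter_upwards [hjeq j] with x hx _; exact hx
      · filter_upwards with x hj'; exact absurd hj' hj
    filter_upwards [this] with x hx
    exact Finset.sum_congr rfl fun j hj => hx j (Finset.mem_range.mp hj)
  -- the full measure set
  set Xt : Set X := {x | (∀ k : ℕ, ∃ n : ℕ, 1 ≤ n ∧ dist (T^[n] x) x < 1 / (k + 1) ∧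
      |birkhoffSum T φ' n x| < 1 / (k + 1)) ∧
      ∀ n : ℕ, birkhoffSum T φ n x = birkhoffSum T φ' n x} with hXt
  have hXtae : ∀ᵐ x ∂μ, x ∈ Xt := by
    have h1 : ∀ᵐ x ∂μ, ∀ k : ℕ, ∃ n : ℕ, 1 ≤ n ∧ dist (T^[n] x) x < 1 / (k + 1) ∧
        |birkhoffSum T φ' n x| < 1 / (k + 1) :=
      ae_all_iff.mpr fun k => atk_cover hT hφ'm hi' hmean' (by positivity)
    filter_upwards [h1, hSeq] with x hx1 hx2
    exact ⟨hx1, hx2⟩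
  refine ⟨Xt, ?_, ?_⟩
  · rw [Set.compl_def]
    exact ae_iff.mp hXtae
  intro x hx
  obtain ⟨hP, hEq⟩ := hx
  -- key step: arbitrarily large return times
  have Q : ∀ (M : ℕ) (δ : ℝ), 0 < δ → ∃ n : ℕ, M < n ∧ dist (T^[n] x) x < δ ∧
      |birkhoffSum T φ' n x| < δ := by
    by_cases hper : ∃ m : ℕ, 1 ≤ m ∧ T^[m] x = x ∧ birkhoffSum T φ' m x = 0
    · obtain ⟨m, hm1, hfix, hzero⟩ := hper
      have hfix' : Function.IsFixedPt T^[m] x := hfix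
      have hiter : ∀ k : ℕ, T^[m * k] x = x := by
        intro k
        rw [Function.iterate_mul]
        exact hfix'.iterate k
      have hsum : ∀ k : ℕ, birkhoffSum T φ' (m * k) x = 0 := by
        intro k
        induction k with
        | zero => simp
        | succ k ih =>
          have : m * (k + 1) = m * k + m := by ring
          rw [this, birkhoffSum_add, hiter k, ih, hzero, add_zero]
      intro M δ hδ
      refine ⟨m * (M + 1), ?_, ?_, ?_⟩
      · calc M < M + 1 := Nat.lt_succ_self M
          _ ≤ m * (M + 1) := Nat.le_mul_of_pos_left _ hm1
      · rw [hiter (M + 1)]; simpa using hδ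
      · rw [hsum (M + 1)]; simpa using hδ
    · push_neg at hper
      intro M δ hδ
      have hη : ∃ η : ℝ, 0 < η ∧ η ≤ δ ∧ ∀ m : ℕ, 1 ≤ m → m ≤ M →
          η ≤ max (dist (T^[m] x) x) |birkhoffSum T φ' m x| := by
        clear hP
        induction M with
        | zero => exact ⟨δ, hδ, le_rfl, fun m hm1 hm0 => by omega⟩
        | succ M ih =>
          obtain ⟨η', hη'0, hη'δ, hη'⟩ := ih
          set F : ℝ := max (dist (T^[M + 1] x) x) |birkhoffSum T φ' (M + 1) x| with hF
          have hF0 : 0 < F := by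
            rcases lt_or_ge 0 F with h | h
            · exact h
            · exfalso
              have hd : dist (T^[M + 1] x) x ≤ 0 := le_trans (le_max_left _ _) h
              have hs : |birkhoffSum T φ' (M + 1) x| ≤ 0 := le_trans (le_max_right _ _) h
              have hd' : T^[M + 1] x = x := by
                rw [← dist_le_zero]; exact hd
              have hs' : birkhoffSum T φ' (M + 1) x = 0 := by
                rw [← abs_nonpos_iff]; exact hs
              exact hper (M + 1) (Nat.succ_le_succ (Nat.zero_le M)) hd' hs'
          refine ⟨min η' F, lt_min hη'0 hF0, (min_le_left _ _).trans hη'δ, ?_⟩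
          intro m hm1 hmM
          rcases Nat.lt_or_ge m (M + 1) with h | h
          · exact (min_le_left _ _).trans (hη' m hm1 (Nat.lt_succ_iff.mp h))
          · have : m = M + 1 := le_antisymm hmM h
            rw [this]
            exact min_le_right _ _
      obtain ⟨η, hη0, hηδ, hηmin⟩ := hη
      obtain ⟨k, hk⟩ := exists_nat_one_div_lt hη0
      obtain ⟨n, hn1, hnd, hnS⟩ := hP k
      have hMn : M < n := by
        by_contra hMn
        push_neg at hMn
        have h1 := hηmin n hn1 hMn
        have h2 : max (dist (T^[n] x) x) |birkhoffSum T φ' n x| < 1 / (k + 1) :=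
          max_lt hnd hnS
        linarith
      exact ⟨n, hMn, hnd.trans (hk.trans_le hηδ), hnS.trans (hk.trans_le hηδ)⟩
  -- build the sequence
  have Q' : ∀ (i M : ℕ), ∃ n : ℕ, M < n ∧ dist (T^[n] x) x < 1 / (i + 1) ∧
      |birkhoffSum T φ' n x| < 1 / (i + 1) := fun i M => Q M (1 / (i + 1)) (by positivity)
  let seq : ℕ → ℕ := fun i => Nat.rec (Q' 0 0).choose (fun i prev => (Q' (i + 1) prev).choose) i
  have hseq0 : 0 < seq 0 ∧ dist (T^[seq 0] x) x < 1 / (((0:ℕ) : ℝ) + 1) ∧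
      |birkhoffSum T φ' (seq 0) x| < 1 / (((0:ℕ) : ℝ) + 1) := (Q' 0 0).choose_spec
  have hstep : ∀ i : ℕ, seq i < seq (i + 1) ∧
      dist (T^[seq (i + 1)] x) x < 1 / ((i + 1 : ℕ) + 1) ∧
      |birkhoffSum T φ' (seq (i + 1)) x| < 1 / ((i + 1 : ℕ) + 1) :=
    fun i => (Q' (i + 1) (seq i)).choose_spec
  have hmono : StrictMono seq := strictMono_nat_of_lt_succ fun i => (hstep i).1
  have hpos : ∀ i, 0 < seq i := by
    intro i
    cases i with
    | zero => exact hseq0.1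
    | succ i => exact lt_of_le_of_lt (Nat.zero_le _) (hstep i).1
  have hbnd : ∀ i : ℕ, dist (T^[seq i] x) x < 1 / ((i : ℝ) + 1) ∧
      |birkhoffSum T φ' (seq i) x| < 1 / ((i : ℝ) + 1) := by
    intro i
    cases i with
    | zero => exact ⟨by simpa using hseq0.2.1, by simpa using hseq0.2.2⟩
    | succ i =>
      refine ⟨?_, ?_⟩
      · have := (hstep i).2.1; push_cast at this ⊢; convert this using 2
      · have := (hstep i).2.2; push_cast at this ⊢; convert this using 2
  have htend : Tendsto (fun i : ℕ => 1 / ((i : ℝ) + 1)) atTop (nhds 0) :=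
    tendsto_one_div_add_atTop_nhds_zero_nat
  refine ⟨seq, hmono, hpos, ?_, ?_⟩
  · rw [tendsto_iff_dist_tendsto_zero]
    exact squeeze_zero (fun i => dist_nonneg) (fun i => (hbnd i).1.le) htend
  · have : (fun i => |∑ j ∈ Finset.range (seq i), φ (T^[j] x)|) =
        fun i => |birkhoffSum T φ' (seq i) x| := by
      funext i
      rw [show (∑ j ∈ Finset.range (seq i), φ (T^[j] x)) = birkhoffSum T φ (seq i) x from rfl,
        hEq (seq i)]
    rw [this]
    exact squeeze_zero (fun i => abs_nonneg _) (fun i => (hbnd i).2.le) htend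

end Cover


/-- **Atkinson's Lemma.** Let `(X, μ)` be a separable metric probability space,
`T : X → X` ergodic with respect to `μ`, and `φ : X → ℝ` integrable with `∫ φ dμ = 0`.
Then there is a full-measure set `X̃` such that every `x ∈ X̃` admits a strictly
increasing sequence of positive integers `n i` with `T^[n i] x → x` and
`|∑_{j<n i} φ(T^j x)| → 0`. -/
theorem atkinson_lemma {X : Type*} [MetricSpace X] [TopologicalSpace.SeparableSpace X]
    [MeasurableSpace X] [BorelSpace X]
    (μ : Measure X) [IsProbabilityMeasure μ]
    (T : X → X) (hT : Ergodic T μ)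
    (φ : X → ℝ) (hφ : Integrable φ μ) (hmean : ∫ x, φ x ∂μ = 0) :
    ∃ Xt : Set X, μ Xtᶜ = 0 ∧ ∀ x ∈ Xt, ∃ n : ℕ → ℕ, StrictMono n ∧ (∀ i, 0 < n i) ∧
      Tendsto (fun i => T^[n i] x) atTop (nhds x) ∧
      Tendsto (fun i => |∑ j ∈ Finset.range (n i), φ (T^[j] x)|) atTop (nhds 0) := by
  exact atkinson_lemma' μ T hT φ hφ hmean
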